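/- arXiv:alg-geom/9602016 — 5 statements merged into one kernel-verified Lean document; each statement's English description precedes it below -/
import Mathlib

section
/- Let F be an irreducible quartic form in ℂ[x,y,z] and suppose F = UW - V² = UW' - V'² with U irreducible quadratic. Then there exists λ ∈ ℂ and a sign ε ∈ {±1} with V' = ε(λU - V) and W' = λ²U - 2λV + W; in particular (U,V,W) and (U,V',W') define the same one-parameter family of touching conics. -/
open MvPolynomial

private lemma deg_sum_eq (d : Fin 3 →₀ ℕ) : (d.sum fun _ e => e) = d.degree := by
  simp [Finsupp.degree, Finsupp.sum]
  rfl

private lemma top_comp_ne_zero (Q : MvPolynomial (Fin 3) ℂ) (hQ : Q ≠ 0) :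
    homogeneousComponent Q.totalDegree Q ≠ 0 := by
  obtain ⟨d, hd, hdeg⟩ := Finset.exists_mem_eq_sup Q.support
    (support_nonempty.mpr hQ) (fun s => s.sum fun _ e => e)
  intro h
  have hc : coeff d (homogeneousComponent Q.totalDegree Q) = coeff d Q := by
    rw [coeff_homogeneousComponent, if_pos]
    rw [← deg_sum_eq, ← hdeg]; rfl
  rw [h, coeff_zero] at hc
  exact (mem_support_iff.mp hd) hc.symm

/-- If `U` is homogeneous of degree 2 and nonzero and `U * Q` is homogeneous of degree 2
and nonzero, then `Q` is a constant. -/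
private lemma quotient_is_constant (U Q : MvPolynomial (Fin 3) ℂ)
    (hU : U.IsHomogeneous 2) (hUne : U ≠ 0) (hP : (U * Q).IsHomogeneous 2)
    (hPne : U * Q ≠ 0) : ∃ c : ℂ, Q = C c := by
  have hQne : Q ≠ 0 := right_ne_zero_of_mul hPne
  have htd : (U * Q).totalDegree = 2 := hP.totalDegree hPne
  -- show Q.totalDegree = 0
  have ht0 : Q.totalDegree = 0 := by
    by_contra ht
    have ht : 0 < Q.totalDegree := Nat.pos_of_ne_zero ht
    set t := Q.totalDegree with htdef
    set Qt := homogeneousComponent t Q with hQtdef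
    have hQth : Qt.IsHomogeneous t := homogeneousComponent_isHomogeneous t Q
    have hQtne : Qt ≠ 0 := top_comp_ne_zero Q hQne
    have hUQt : (U * Qt).totalDegree = 2 + t :=
      (hU.mul hQth).totalDegree (mul_ne_zero hUne hQtne)
    have hQr : (Q - Qt).totalDegree < t := by
      rcases eq_or_ne (Q - Qt) 0 with h0 | h0
      · rw [h0, totalDegree_zero]; exact ht
      rw [MvPolynomial.totalDegree]
      rw [Finset.sup_lt_iff (by exact ht)]
      intro d hd
      have hcd : coeff d (Q - Qt) ≠ 0 := mem_support_iff.mp hd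
      have hcQt : coeff d Qt = if d.degree = t then coeff d Q else 0 :=
        coeff_homogeneousComponent t Q d
      have hdt : d.degree ≠ t := by
        intro hdt
        rw [coeff_sub, hcQt, if_pos hdt, sub_self] at hcd
        exact hcd rfl
      have hdQ : d ∈ Q.support := by
        rw [mem_support_iff]
        intro h0'
        rw [coeff_sub, h0', hcQt, if_neg hdt, sub_zero] at hcd
        exact hcd rfl
      have := le_totalDegree hdQ
      rw [deg_sum_eq] at this ⊢
      omega
    have hUQr : (U * (Q - Qt)).totalDegree < 2 + t :=
      lt_of_le_of_lt (totalDegree_mul U (Q - Qt))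
        (by have := hU.totalDegree_le; omega)
    have hsplit : U * Q = U * Qt + U * (Q - Qt) := by ring
    have : (U * Q).totalDegree = 2 + t := by
      rw [hsplit, totalDegree_add_eq_left_of_totalDegree_lt (by rw [hUQt]; exact hUQr)]
      exact hUQt
    omega
  -- Q homogeneous of degree 0 hence constant
  refine ⟨coeff 0 Q, ?_⟩
  have hh : Q.IsHomogeneous 0 := (totalDegree_zero_iff_isHomogeneous (Fin 3)).mp ht0
  ext d
  rcases eq_or_ne d 0 with rfl | hd
  · simp
  · rw [hh.coeff_eq_zero (by rwa [Ne, Finsupp.degree_eq_zero_iff])]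
    rw [coeff_C, if_neg (Ne.symm hd)]

private lemma dvd_const_mul (U P : MvPolynomial (Fin 3) ℂ)
    (hU : U.IsHomogeneous 2) (hUne : U ≠ 0) (hP : P.IsHomogeneous 2)
    (h : U ∣ P) : ∃ c : ℂ, P = C c * U := by
  obtain ⟨Q, hQ⟩ := h
  rcases eq_or_ne P 0 with rfl | hPne
  · exact ⟨0, by simp⟩
  obtain ⟨c, hc⟩ := quotient_is_constant U Q hU hUne (hQ ▸ hP) (hQ ▸ hPne)
  exact ⟨c, by rw [hQ, hc, mul_comm]⟩

/-- If an irreducible quartic `F` admits two presentations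
`F = UW - V² = UW' - V'²` with the same irreducible quadratic `U`, then
`V' = ε(λU - V)` and `W' = λ²U - 2λV + W` for some `λ ∈ ℂ` and sign `ε ∈ {±1}`;
in particular `(U,V,W)` and `(U,V',W')` define the same one-parameter family. -/
theorem same_conic_same_family
    (F U V W V' W' : MvPolynomial (Fin 3) ℂ)
    (hF4 : F.IsHomogeneous 4) (hFirr : Irreducible F)
    (hU : U.IsHomogeneous 2) (hV : V.IsHomogeneous 2) (hW : W.IsHomogeneous 2)
    (hV' : V'.IsHomogeneous 2) (hW' : W'.IsHomogeneous 2)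
    (hUirr : Irreducible U)
    (h1 : F = U * W - V ^ 2) (h2 : F = U * W' - V' ^ 2) :
    ∃ (lam eps : ℂ), (eps = 1 ∨ eps = -1) ∧
      V' = C eps * (C lam * U - V) ∧
      W' = (C lam) ^ 2 * U - 2 * C lam * V + W := by
  have hUne : U ≠ 0 := hUirr.ne_zero
  have hUp : Prime U := UniqueFactorizationMonoid.irreducible_iff_prime.mp hUirr
  have hdvd : U ∣ (V' - V) * (V' + V) := ⟨W' - W, by linear_combination h2 - h1⟩
  rcases hUp.dvd_or_dvd hdvd with h | h
  · -- U ∣ V' - V : eps = -1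
    obtain ⟨c, hc⟩ := dvd_const_mul U (V' - V) hU hUne (hV'.sub hV) h
    refine ⟨-c, -1, Or.inr rfl, ?_, ?_⟩
    · rw [map_neg, map_neg, map_one]; linear_combination hc
    · have : U * W' = U * ((C (-c)) ^ 2 * U - 2 * C (-c) * V + W) := by
        rw [map_neg]
        linear_combination h1 - h2 + (V' + V + C c * U) * hc
      exact mul_left_cancel₀ hUne this
  · -- U ∣ V' + V : eps = 1
    obtain ⟨c, hc⟩ := dvd_const_mul U (V' + V) hU hUne (hV'.add hV) h
    refine ⟨c, 1, Or.inl rfl, ?_, ?_⟩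
    · rw [map_one, one_mul]; linear_combination hc
    · have : U * W' = U * ((C c) ^ 2 * U - 2 * C c * V + W) := by
        linear_combination h1 - h2 + (V' - V + C c * U) * hc
      exact mul_left_cancel₀ hUne this
end

section
/- If F = L²W - V² with L a linear form and V, W quadratic forms in ℂ[x,y,z], and the quartic curve F = 0 is irreducible, then the curve F = 0 has at least two singular points or a cusp; in particular, an irreducible quartic with at most one ordinary node cannot be written as L²W - V². -/
open MvPolynomial

/-- A point `p ≠ 0` of `ℙ²` (given by homogeneous coordinates) is a singular point of the
plane curve `F = 0` if `F` and all its partial derivatives vanish at `p`. -/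
def IsSingularPointOf (F : MvPolynomial (Fin 3) ℂ) (p : Fin 3 → ℂ) : Prop :=
  eval p F = 0 ∧ ∀ i : Fin 3, eval p (pderiv i F) = 0

/-- The Hessian matrix of second partial derivatives of `F` evaluated at `p`. -/
noncomputable def hessianAt (F : MvPolynomial (Fin 3) ℂ) (p : Fin 3 → ℂ) : Matrix (Fin 3) (Fin 3) ℂ :=
  Matrix.of fun i j => eval p (pderiv i (pderiv j F))

namespace SquareFactorAux

lemma eval_aeval (f : Fin 3 → Polynomial ℂ) (t : ℂ) (p : MvPolynomial (Fin 3) ℂ) :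
    Polynomial.eval t (aeval f p) = eval (fun i => Polynomial.eval t (f i)) p := by
  induction p using MvPolynomial.induction_on with
  | C a => simp
  | add p q hp hq => simp [hp, hq]
  | mul_X p i hp => simp [hp]

lemma derivative_aeval (f : Fin 3 → Polynomial ℂ) (p : MvPolynomial (Fin 3) ℂ) :
    Polynomial.derivative (aeval f p) =
      ∑ i, Polynomial.derivative (f i) * aeval f (pderiv i p) := by
  induction p using MvPolynomial.induction_on with
  | C a => simp
  | add p q hp hq =>
      simp only [map_add, hp, hq, ← Finset.sum_add_distrib, mul_add]
  | mul_X p i hp =>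
      have key : ∀ j : Fin 3, Polynomial.derivative (f j) * aeval f (pderiv j (p * X i)) =
          Polynomial.derivative (f j) * aeval f (pderiv j p) * f i
            + (if j = i then aeval f p * Polynomial.derivative (f i) else 0) := by
        intro j
        rcases eq_or_ne j i with rfl | hj
        · simp only [pderiv_mul, pderiv_X_self, map_add, map_mul, aeval_X, mul_one,
            if_pos rfl, if_true]
          ring
        · simp only [pderiv_mul, pderiv_X_of_ne (Ne.symm hj), map_add, map_mul, aeval_X,
            map_zero, mul_zero, add_zero, if_neg hj]
          ring
      rw [map_mul, aeval_X, Polynomial.derivative_mul, hp,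
        Finset.sum_congr rfl (fun j _ => key j),
        Finset.sum_add_distrib, Finset.sum_ite_eq' Finset.univ i]
      simp [Finset.sum_mul]

lemma coeff_sum_eq {p : MvPolynomial (Fin 3) ℂ} {n : ℕ} (hp : p.IsHomogeneous n)
    {d : Fin 3 →₀ ℕ} (hd : coeff d p ≠ 0) : d 0 + d 1 + d 2 = n := by
  have h := hp hd
  rw [← h]
  show _ = Finsupp.weight (fun _ => 1) d
  rw [← Finsupp.degree_eq_weight_one, Finsupp.degree_apply,
    Finset.sum_subset (Finset.subset_univ _) (by
      intro x _ hx
      simpa using Finsupp.notMem_support_iff.mp hx),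
    Fin.sum_univ_three]

lemma eval_mul_scalar {p : MvPolynomial (Fin 3) ℂ} {n : ℕ} (hp : p.IsHomogeneous n)
    (x : Fin 3 → ℂ) (s : ℂ) :
    eval (fun i => x i * s) p = eval x p * s ^ n := by
  rw [eval_eq', eval_eq', Finset.sum_mul]
  apply Finset.sum_congr rfl
  intro d hd
  have hdeg := coeff_sum_eq hp (mem_support_iff.mp hd)
  rw [Fin.prod_univ_three, Fin.prod_univ_three, ← hdeg]
  ring

lemma euler {p : MvPolynomial (Fin 3) ℂ} {n : ℕ} (hp : p.IsHomogeneous n) (x : Fin 3 → ℂ) :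
    ∑ i, x i * eval x (pderiv i p) = n * eval x p := by
  set f : Fin 3 → Polynomial ℂ := fun i => Polynomial.C (x i) * Polynomial.X with hf
  have hg : aeval f p = Polynomial.C (eval x p) * Polynomial.X ^ n := by
    apply Polynomial.funext
    intro s
    rw [eval_aeval]
    have : (fun i => Polynomial.eval s (f i)) = fun i => x i * s := by
      funext i; simp [hf]
    rw [this, eval_mul_scalar hp]
    simp
  have hd := congrArg (Polynomial.eval 1) (congrArg Polynomial.derivative hg)
  rw [derivative_aeval] at hd
  have hlhs : Polynomial.eval 1 (∑ i, Polynomial.derivative (f i) * aeval f (pderiv i p)) =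
      ∑ i, x i * eval x (pderiv i p) := by
    rw [Polynomial.eval_finset_sum]
    apply Finset.sum_congr rfl
    intro i _
    rw [Polynomial.eval_mul, eval_aeval]
    have : (fun j => Polynomial.eval 1 (f j)) = x := by funext j; simp [hf]
    rw [this]
    simp [hf]
  rw [hlhs] at hd
  rw [hd]
  rcases Nat.eq_zero_or_pos n with rfl | hn
  · simp
  · rw [Polynomial.derivative_C_mul, Polynomial.derivative_X_pow]
    simp [mul_comm]

lemma isHomog_pderiv {p : MvPolynomial (Fin 3) ℂ} {n : ℕ} (hp : p.IsHomogeneous (n + 1))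
    (i : Fin 3) : (pderiv i p).IsHomogeneous n := by
  rw [p.as_sum, map_sum]
  apply IsHomogeneous.sum
  intro d hd
  rw [pderiv_monomial]
  rcases Nat.eq_zero_or_pos (d i) with h0 | h0
  · rw [h0]
    simp only [Nat.cast_zero, mul_zero, map_zero]
    exact isHomogeneous_zero _ _ n
  · apply isHomogeneous_monomial
    have hdd := coeff_sum_eq hp (mem_support_iff.mp hd)
    have hdeg : ∀ e : Fin 3 →₀ ℕ, Finsupp.degree e = e 0 + e 1 + e 2 := by
      intro e
      rw [Finsupp.degree_apply, Finset.sum_subset (Finset.subset_univ _) (by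
        intro x _ hx
        simpa using Finsupp.notMem_support_iff.mp hx), Fin.sum_univ_three]
    rw [hdeg]
    simp only [Finsupp.tsub_apply]
    have hi1 : 1 ≤ d i := h0
    fin_cases i <;> simp_all [Finsupp.single_apply] <;> omega

lemma eq_C_of_isHomogeneous_zero {q : MvPolynomial (Fin 3) ℂ} (hq : q.IsHomogeneous 0) :
    q = C (coeff 0 q) := by
  ext d
  rcases eq_or_ne d 0 with rfl | hd
  · simp
  · rw [coeff_C, if_neg (Ne.symm hd)]
    exact hq.coeff_eq_zero (by rwa [Ne, Finsupp.degree_eq_zero_iff])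

lemma natDegree_aeval_le {p : MvPolynomial (Fin 3) ℂ} {n : ℕ} (hp : p.IsHomogeneous n)
    (f : Fin 3 → Polynomial ℂ) (hf : ∀ i, (f i).natDegree ≤ 1) :
    (aeval f p).natDegree ≤ n := by
  rw [aeval_def, eval₂_eq]
  apply Polynomial.natDegree_sum_le_of_forall_le
  intro d hd
  apply le_trans (Polynomial.natDegree_mul_le)
  have h1 : (algebraMap ℂ (Polynomial ℂ) (coeff d p)).natDegree = 0 := by
    simp [Polynomial.natDegree_C]
  rw [h1, zero_add]
  apply le_trans (Polynomial.natDegree_prod_le _ _)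
  have : ∀ i : Fin 3, (f i ^ d i).natDegree ≤ d i := by
    intro i
    apply le_trans (Polynomial.natDegree_pow_le)
    calc d i * (f i).natDegree ≤ d i * 1 := Nat.mul_le_mul_left _ (hf i)
    _ = d i := mul_one _
  calc ∑ i ∈ d.support, (f i ^ d i).natDegree ≤ ∑ i ∈ d.support, d i :=
        Finset.sum_le_sum (fun i _ => this i)
  _ ≤ ∑ i : Fin 3, d i := Finset.sum_le_sum_of_subset (Finset.subset_univ _)
  _ = n := by rw [Fin.sum_univ_three]; exact coeff_sum_eq hp (mem_support_iff.mp hd)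

end SquareFactorAux

open SquareFactorAux in
/-- If `F = L²W - V²` with `L` a linear form and `V, W` quadratic forms, and the
quartic curve `F = 0` is irreducible, then the curve has at least two singular points or a
cusp (a singular point whose tangent cone is degenerate, i.e. the Hessian at the point has
rank at most one); in particular an irreducible quartic with at most one ordinary node cannot
be written in the form `L²W - V²`. -/
theorem square_factor_forces_bad_singularities
    (L V W F : MvPolynomial (Fin 3) ℂ)
    (hL : L.IsHomogeneous 1) (hV : V.IsHomogeneous 2) (hW : W.IsHomogeneous 2)
    (hF : F = L ^ 2 * W - V ^ 2) (hFirr : Irreducible F) :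
    (∃ p q : Fin 3 → ℂ, p ≠ 0 ∧ q ≠ 0 ∧ (∀ c : ℂ, q ≠ c • p) ∧
        IsSingularPointOf F p ∧ IsSingularPointOf F q) ∨
    (∃ p : Fin 3 → ℂ, p ≠ 0 ∧ IsSingularPointOf F p ∧ (hessianAt F p).rank ≤ 1) := by
  classical
  -- `L` is not the zero polynomial
  have hL0 : L ≠ 0 := by
    rintro rfl
    have hF' : F = (-V) * V := by rw [hF]; ring
    have hunit : IsUnit V := by
      rcases hFirr.isUnit_or_isUnit hF' with h | h
      · exact (IsUnit.neg_iff V).mp h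
      · exact h
    exact hFirr.not_isUnit (by rw [hF']; exact (hunit.neg.mul hunit))
  -- the coefficients of `L`
  set lc : Fin 3 → ℂ := fun i => coeff 0 (pderiv i L) with hlcdef
  have hpd : ∀ i, pderiv i L = C (lc i) := fun i =>
    eq_C_of_isHomogeneous_zero (isHomog_pderiv hL i)
  have hLeval : ∀ x : Fin 3 → ℂ, eval x L = ∑ i, lc i * x i := by
    intro x
    have h := euler hL x
    simp only [hpd, eval_C, Nat.cast_one, one_mul] at h
    rw [← h]
    exact Finset.sum_congr rfl fun i _ => mul_comm _ _
  have heulerV : ∀ x : Fin 3 → ℂ, ∑ i, x i * eval x (pderiv i V) = 2 * eval x V := by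
    intro x
    have h := euler hV x
    norm_num at h
    exact h
  -- a coordinate where `lc` does not vanish
  obtain ⟨j, hj⟩ : ∃ j, lc j ≠ 0 := by
    by_contra h
    push_neg at h
    refine hL0 (MvPolynomial.funext fun x => ?_)
    rw [hLeval x]
    simp [h]
  have hfin3 : ∀ j' m : Fin 3,
      (m = j' ∨ m = j' + 1 ∨ m = j' + 2) ∧ j' + 1 ≠ j' ∧ j' + 2 ≠ j' ∧ j' + 1 ≠ j' + 2 := by
    decide
  set k : Fin 3 := j + 1 with hkdef
  set l : Fin 3 := j + 2 with hldef
  have hcases : ∀ m : Fin 3, m = j ∨ m = k ∨ m = l := fun m => (hfin3 j m).1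
  have hkj : k ≠ j := (hfin3 j j).2.1
  have hlj : l ≠ j := (hfin3 j j).2.2.1
  have hkl : k ≠ l := (hfin3 j j).2.2.2
  -- two independent points on the line `L = 0`
  set a : Fin 3 → ℂ := fun m => (Pi.single k 1 : Fin 3 → ℂ) m + (Pi.single j (-(lc k / lc j)) : Fin 3 → ℂ) m with ha
  set b : Fin 3 → ℂ := fun m => (Pi.single l 1 : Fin 3 → ℂ) m + (Pi.single j (-(lc l / lc j)) : Fin 3 → ℂ) m with hb
  have hak : a k = 1 := by simp [ha, Pi.single_apply, hkj]
  have hal : a l = 0 := by simp [ha, Pi.single_apply, hlj, Ne.symm hkl]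
  have hbk : b k = 0 := by simp [hb, Pi.single_apply, hkj, hkl]
  have hbl : b l = 1 := by simp [hb, Pi.single_apply, hlj]
  have hsingle : ∀ (w : Fin 3 → ℂ) (m : Fin 3) (c : ℂ),
      ∑ i, w i * (Pi.single m c : Fin 3 → ℂ) i = w m * c := by
    intro w m c
    rw [Finset.sum_eq_single m]
    · simp
    · intro i _ him; simp [Pi.single_eq_of_ne him]
    · simp
  have hua : ∑ i, lc i * a i = 0 := by
    simp only [ha, mul_add, Finset.sum_add_distrib, hsingle]
    field_simp
    ring
  have hub : ∑ i, lc i * b i = 0 := by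
    simp only [hb, mul_add, Finset.sum_add_distrib, hsingle]
    field_simp
    ring
  -- the parametrized line
  set P : ℂ → (Fin 3 → ℂ) := fun t m => a m + b m * t with hP
  have hPk : ∀ t, P t k = 1 := by intro t; simp [hP, hak, hbk]
  have hPl : ∀ t, P t l = t := by intro t; simp [hP, hal, hbl]
  have hPne : ∀ t, P t ≠ 0 := by
    intro t h
    have := congrFun h k
    rw [hPk t] at this
    exact one_ne_zero this
  have hbne : b ≠ 0 := by
    intro h
    have := congrFun h l
    rw [hbl] at this
    exact one_ne_zero this
  have hLline : ∀ t : ℂ, eval (P t) L = 0 := by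
    intro t
    rw [hLeval]
    have : ∀ i, lc i * P t i = lc i * a i + lc i * b i * t := by
      intro i; simp only [hP]; ring
    rw [Finset.sum_congr rfl fun i _ => this i, Finset.sum_add_distrib, hua,
      ← Finset.sum_mul, hub]
    ring
  have hLb : eval b L = 0 := by rw [hLeval]; exact hub
  -- the restriction of `V` to the line, in the chart `t ↦ a + t b`
  set fq : Fin 3 → Polynomial ℂ := fun i => Polynomial.C (a i) + Polynomial.C (b i) * Polynomial.X
    with hfq
  set q : Polynomial ℂ := aeval fq V with hqdef
  have hdeg1 : ∀ (c d : ℂ), (Polynomial.C c + Polynomial.C d * Polynomial.X).natDegree ≤ 1 := by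
    intro c d
    apply le_trans (Polynomial.natDegree_add_le _ _)
    simp only [Polynomial.natDegree_C, max_le_iff]
    exact ⟨Nat.zero_le _, le_trans (Polynomial.natDegree_mul_le)
      (by simp [Polynomial.natDegree_X_le])⟩
  have hqdeg : q.natDegree ≤ 2 :=
    natDegree_aeval_le hV fq fun i => by rw [hfq]; exact hdeg1 _ _
  set α : ℂ := q.coeff 0 with hα'
  set β : ℂ := q.coeff 1 with hβ'
  set γ : ℂ := q.coeff 2 with hγ'
  have hqeval : ∀ t : ℂ, Polynomial.eval t q = α + β * t + γ * t ^ 2 := by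
    intro t
    rw [Polynomial.eval_eq_sum_range' (show q.natDegree < 3 by omega)]
    simp only [Finset.sum_range_succ, Finset.sum_range_zero, pow_zero, pow_one, zero_add, mul_one]
    rfl
  have hfqP : ∀ t : ℂ, (fun i => Polynomial.eval t (fq i)) = P t := by
    intro t; funext i; simp [hfq, hP]
  have hqV : ∀ t : ℂ, Polynomial.eval t q = eval (P t) V := by
    intro t
    rw [hqdef, eval_aeval, hfqP]
  have hq'V : ∀ t : ℂ, Polynomial.eval t (Polynomial.derivative q)
      = ∑ i, b i * eval (P t) (pderiv i V) := by
    intro t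
    rw [hqdef, derivative_aeval, Polynomial.eval_finset_sum]
    refine Finset.sum_congr rfl fun i _ => ?_
    rw [Polynomial.eval_mul, eval_aeval, hfqP]
    congr 1
    simp [hfq]
  have hq' : ∀ t : ℂ, Polynomial.eval t (Polynomial.derivative q) = β + 2 * γ * t := by
    intro t
    have hdeg' : (Polynomial.derivative q).natDegree < 2 :=
      lt_of_le_of_lt (Polynomial.natDegree_derivative_le q) (by omega)
    rw [Polynomial.eval_eq_sum_range' hdeg']
    simp only [Finset.sum_range_succ, Finset.sum_range_zero, pow_zero, pow_one, zero_add, mul_one,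
      Polynomial.coeff_derivative]
    push_cast
    ring
  -- the other chart `s ↦ b + s a`
  set fr : Fin 3 → Polynomial ℂ := fun i => Polynomial.C (b i) + Polynomial.C (a i) * Polynomial.X
    with hfr
  set r : Polynomial ℂ := aeval fr V with hrdef
  have hfrP : ∀ s : ℂ, (fun i => Polynomial.eval s (fr i)) = fun m => b m + a m * s := by
    intro s; funext i; simp [hfr]
  have hrV : ∀ s : ℂ, Polynomial.eval s r = eval (fun m => b m + a m * s) V := by
    intro s
    rw [hrdef, eval_aeval, hfrP]
  have hr : r = Polynomial.C γ + Polynomial.C β * Polynomial.X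
      + Polynomial.C α * Polynomial.X ^ 2 := by
    apply Polynomial.eq_of_infinite_eval_eq
    apply Set.Infinite.mono (s := {(0 : ℂ)}ᶜ)
    · intro s hs
      have hs0 : s ≠ 0 := hs
      show Polynomial.eval s r = _
      have hfun : (fun m => b m + a m * s) = fun m => P s⁻¹ m * s := by
        funext m
        simp only [hP]
        field_simp
        ring
      rw [hrV, hfun, eval_mul_scalar hV, ← hqV, hqeval]
      simp only [Polynomial.eval_add, Polynomial.eval_mul, Polynomial.eval_C,
        Polynomial.eval_X, Polynomial.eval_pow]
      field_simp
      ring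
    · exact Set.Finite.infinite_compl (Set.finite_singleton 0)
  have hVb : eval b V = γ := by
    have h1 := hrV 0
    rw [hr] at h1
    have h2 : (fun m => b m + a m * 0) = b := by funext m; ring
    rw [h2] at h1
    simpa using h1.symm
  have hr'b : ∑ i, a i * eval b (pderiv i V) = β := by
    have h1 : Polynomial.eval 0 (Polynomial.derivative r)
        = ∑ i, a i * eval b (pderiv i V) := by
      rw [hrdef, derivative_aeval, Polynomial.eval_finset_sum]
      refine Finset.sum_congr rfl fun i _ => ?_
      rw [Polynomial.eval_mul, eval_aeval, hfrP]
      have h2 : (fun m => b m + a m * 0) = b := by funext m; ring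
      rw [h2]
      congr 1
      simp [hfr]
    have h2 : Polynomial.eval 0 (Polynomial.derivative r) = β := by
      rw [hr]; simp
    rw [← h1, h2]
  -- every point of the line where `V` vanishes is singular
  have hsing : ∀ p : Fin 3 → ℂ, eval p L = 0 → eval p V = 0 → IsSingularPointOf F p := by
    intro p hLp hVp
    constructor
    · simp [hF, hLp, hVp]
    · intro i
      simp [hF, pderiv_mul, pderiv_pow, hLp, hVp]
  -- gradient proportional to `lc` forces degenerate Hessian
  have hrank : ∀ (p : Fin 3 → ℂ) (c : ℂ), eval p L = 0 → eval p V = 0 →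
      (∀ i, eval p (pderiv i V) = c * lc i) → (hessianAt F p).rank ≤ 1 := by
    intro p c hLp hVp hv
    have hH : hessianAt F p
        = Matrix.vecMulVec (fun i => (2 * eval p W - 2 * c ^ 2) * lc i) lc := by
      ext i j'
      have hentry : hessianAt F p i j' = 2 * eval p W * eval p (pderiv i L) * eval p (pderiv j' L)
          - 2 * eval p (pderiv i V) * eval p (pderiv j' V) := by
        simp only [hessianAt, Matrix.of_apply, hF, map_sub, pderiv_mul, pderiv_pow]
        simp [hLp, hVp, pderiv_mul]
        ring
      rw [hentry, Matrix.vecMulVec_apply, hv i, hv j', hpd i, hpd j']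
      simp only [eval_C]
      ring
    rw [hH, Matrix.vecMulVec_eq Unit]
    exact le_trans (Matrix.rank_mul_le_left _ _)
      (le_trans (Matrix.rank_le_card_width _) (by simp))
  -- a vector annihilating `a` and `b` is proportional to `lc`
  have hprop : ∀ v : Fin 3 → ℂ, (∑ i, a i * v i = 0) → (∑ i, b i * v i = 0) →
      ∀ m, v m = (v j / lc j) * lc m := by
    intro v hva hvb m
    have hsingle2 : ∀ (m' : Fin 3) (c : ℂ), ∑ i, (Pi.single m' c : Fin 3 → ℂ) i * v i = c * v m' := by
      intro m' c
      rw [Finset.sum_eq_single m']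
      · simp
      · intro i _ him; simp [Pi.single_eq_of_ne him]
      · simp
    have e1 : v k + (-(lc k / lc j)) * v j = 0 := by
      rw [← hva]
      simp only [ha, add_mul, Finset.sum_add_distrib, hsingle2, one_mul]
    have e2 : v l + (-(lc l / lc j)) * v j = 0 := by
      rw [← hvb]
      simp only [hb, add_mul, Finset.sum_add_distrib, hsingle2, one_mul]
    rcases hcases m with rfl | rfl | rfl
    · field_simp
    · field_simp at e1 ⊢
      linear_combination e1
    · field_simp at e2 ⊢
      linear_combination e2
  -- case analysis on the quadratic `α + β t + γ t²`
  by_cases hγ : γ = 0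
  · by_cases hβ : β = 0
    · by_cases hα : α = 0
      · -- `V` vanishes identically on the line: two distinct singular points
        left
        have hsingt : ∀ t : ℂ, IsSingularPointOf F (P t) := fun t =>
          hsing (P t) (hLline t) (by rw [← hqV t, hqeval t, hα, hβ, hγ]; ring)
        refine ⟨P 0, P 1, hPne 0, hPne 1, ?_, hsingt 0, hsingt 1⟩
        intro c h
        have h2 := congrFun h l
        rw [hPl 1] at h2
        simp only [Pi.smul_apply, smul_eq_mul, hPl 0, mul_zero] at h2
        exact one_ne_zero h2
      · -- the line meets `V = 0` only at `b`: a double contact there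
        right
        have hVb0 : eval b V = 0 := by rw [hVb, hγ]
        set v : Fin 3 → ℂ := fun i => eval b (pderiv i V) with hvdef
        have hva : ∑ i, a i * v i = 0 := by rw [hvdef]; rw [hβ] at hr'b; exact hr'b
        have hvb : ∑ i, b i * v i = 0 := by
          rw [hvdef]
          rw [heulerV b, hVb0, mul_zero]
        exact ⟨b, hbne, hsing b hLb hVb0, hrank b (v j / lc j) hLb hVb0 (hprop v hva hvb)⟩
    · -- one root in the chart, and the point `b` at infinity of the chart
      left
      set t₁ : ℂ := -α / β with ht₁
      have hVp1 : eval (P t₁) V = 0 := by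
        rw [← hqV, hqeval, hγ, ht₁]
        field_simp
        ring
      have hVb0 : eval b V = 0 := by rw [hVb, hγ]
      refine ⟨P t₁, b, hPne t₁, hbne, ?_, hsing _ (hLline t₁) hVp1, hsing b hLb hVb0⟩
      intro c h
      have h1 := congrFun h k
      have h2 := congrFun h l
      rw [hbk] at h1
      rw [hbl] at h2
      simp only [Pi.smul_apply, smul_eq_mul, hPk, hPl, mul_one] at h1 h2
      rw [← h1] at h2
      rw [zero_mul] at h2
      exact one_ne_zero h2
  · -- the quadratic is honest: use its discriminant
    obtain ⟨δ, hδ⟩ := IsAlgClosed.exists_pow_nat_eq (β ^ 2 - 4 * α * γ) (n := 2) (by norm_num)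
    by_cases hδ0 : δ = 0
    · -- double root: double contact, degenerate Hessian
      right
      have hdisc : β ^ 2 - 4 * α * γ = 0 := by rw [← hδ, hδ0]; ring
      set t₀ : ℂ := -β / (2 * γ) with ht₀
      set p : Fin 3 → ℂ := P t₀ with hpdef
      have hVp : eval p V = 0 := by
        rw [hpdef, ← hqV, hqeval, ht₀]
        field_simp
        linear_combination -hdisc
      have hq'0 : Polynomial.eval t₀ (Polynomial.derivative q) = 0 := by
        rw [hq', ht₀]
        field_simp
        ring
      set v : Fin 3 → ℂ := fun i => eval p (pderiv i V) with hvdef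
      have hvb : ∑ i, b i * v i = 0 := by
        rw [hvdef, hpdef, ← hq'V]
        exact hq'0
      have hvp : ∑ i, p i * v i = 0 := by
        rw [hvdef, heulerV p, hVp, mul_zero]
      have hva : ∑ i, a i * v i = 0 := by
        have hai : ∀ i, a i = p i - b i * t₀ := by
          intro i; rw [hpdef]; simp only [hP]; ring
        calc ∑ i, a i * v i = ∑ i, (p i * v i - b i * v i * t₀) := by
              refine Finset.sum_congr rfl fun i _ => ?_
              rw [hai i]; ring
        _ = (∑ i, p i * v i) - (∑ i, b i * v i) * t₀ := by
              rw [Finset.sum_sub_distrib, Finset.sum_mul]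
        _ = 0 := by rw [hvp, hvb]; ring
      exact ⟨p, hpdef ▸ hPne t₀, hsing p (hpdef ▸ hLline t₀) hVp,
        hrank p (v j / lc j) (hpdef ▸ hLline t₀) hVp (hprop v hva hvb)⟩
    · -- two distinct roots: two distinct singular points
      left
      set t₁ : ℂ := (-β + δ) / (2 * γ) with ht₁
      set t₂ : ℂ := (-β - δ) / (2 * γ) with ht₂
      have h1 : eval (P t₁) V = 0 := by
        rw [← hqV, hqeval, ht₁]
        field_simp
        linear_combination hδ
      have h2 : eval (P t₂) V = 0 := by
        rw [← hqV, hqeval, ht₂]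
        field_simp
        linear_combination hδ
      have hne : t₂ ≠ t₁ := by
        rw [ht₁, ht₂]
        intro h
        apply hδ0
        field_simp at h
        linear_combination -h / 2
      refine ⟨P t₁, P t₂, hPne t₁, hPne t₂, ?_, hsing _ (hLline t₁) h1, hsing _ (hLline t₂) h2⟩
      intro c h
      have e1 := congrFun h k
      have e2 := congrFun h l
      rw [hPk t₂] at e1
      rw [hPl t₂] at e2
      simp only [Pi.smul_apply, smul_eq_mul, hPk t₁, hPl t₁, mul_one] at e1 e2
      rw [← e1, one_mul] at e2
      exact hne e2
end

section
/- Let F = abcd - V² with a,b,c,d linear forms and V a quadratic form in ℂ[x,y,z], defining a smooth quartic. If ef = λ²ab + 2λV + cd and eg = μ²ac + 2μV' + bd (with V' = λV appropriately, λμ ≠ 0) for linear forms e,f,g, then e divides (λb - μc) or e divides (λμa - d); hence the line e = 0 passes through the intersection point of b = 0 and c = 0, or of a = 0 and d = 0. -/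
open MvPolynomial


lemma deg1_classify (m : Fin 3 →₀ ℕ) (hm : m.degree = 1) :
    m = Finsupp.single 0 1 ∨ m = Finsupp.single 1 1 ∨ m = Finsupp.single 2 1 := by
  have h : m 0 + m 1 + m 2 = 1 := by
    have h2 : m.degree = ∑ i : Fin 3, m i :=
      Finset.sum_subset (Finset.subset_univ _)
        (fun x _ hx => Finsupp.notMem_support_iff.mp hx)
    rw [h2, Fin.sum_univ_three] at hm; exact hm
  have : (m 0 = 1 ∧ m 1 = 0 ∧ m 2 = 0) ∨ (m 0 = 0 ∧ m 1 = 1 ∧ m 2 = 0) ∨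
      (m 0 = 0 ∧ m 1 = 0 ∧ m 2 = 1) := by omega
  rcases this with ⟨h0,h1,h2⟩|⟨h0,h1,h2⟩|⟨h0,h1,h2⟩
  · left; ext x; fin_cases x <;> simp_all [Finsupp.single_apply]
  · right; left; ext x; fin_cases x <;> simp_all [Finsupp.single_apply]
  · right; right; ext x; fin_cases x <;> simp_all [Finsupp.single_apply]

lemma linear_eq (q : MvPolynomial (Fin 3) ℂ) (hq : q.IsHomogeneous 1) :
    q = C (coeff (Finsupp.single 0 1) q) * X 0 + C (coeff (Finsupp.single 1 1) q) * X 1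
      + C (coeff (Finsupp.single 2 1) q) * X 2 := by
  ext m
  simp only [coeff_add, coeff_C_mul, coeff_X']
  by_cases hm : m.degree = 1
  · rcases deg1_classify m hm with rfl|rfl|rfl <;>
      simp [Finsupp.single_left_inj, (by decide : (0:Fin 3) ≠ 1), (by decide : (0:Fin 3) ≠ 2),
        (by decide : (1:Fin 3) ≠ 2), Finsupp.single_eq_single_iff]
  · rw [hq.coeff_eq_zero hm]
    have h0 : m ≠ Finsupp.single 0 1 := by
      rintro rfl; simp [Finsupp.degree_single, Finsupp.support_single_ne_zero] at hm
    have h1 : m ≠ Finsupp.single 1 1 := by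
      rintro rfl; simp [Finsupp.degree_single, Finsupp.support_single_ne_zero] at hm
    have h2 : m ≠ Finsupp.single 2 1 := by
      rintro rfl; simp [Finsupp.degree_single, Finsupp.support_single_ne_zero] at hm
    simp [Ne.symm h0, Ne.symm h1, Ne.symm h2]

lemma eval_linear (q : MvPolynomial (Fin 3) ℂ) (hq : q.IsHomogeneous 1) (p : Fin 3 → ℂ) :
    eval p q = coeff (Finsupp.single 0 1) q * p 0 + coeff (Finsupp.single 1 1) q * p 1
      + coeff (Finsupp.single 2 1) q * p 2 := by
  conv_lhs => rw [linear_eq q hq]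
  simp

lemma common_zero (q r : MvPolynomial (Fin 3) ℂ) (hq : q.IsHomogeneous 1)
    (hr : r.IsHomogeneous 1) :
    ∃ p : Fin 3 → ℂ, p ≠ 0 ∧ eval p q = 0 ∧ eval p r = 0 := by
  classical
  set u : Fin 3 → ℂ := fun i => coeff (Finsupp.single i 1) q with hu
  set v : Fin 3 → ℂ := fun i => coeff (Finsupp.single i 1) r with hv
  let L : (Fin 3 → ℂ) →ₗ[ℂ] (Fin 2 → ℂ) :=
    LinearMap.pi ![∑ i, u i • LinearMap.proj i, ∑ i, v i • LinearMap.proj i]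
  have hnotinj : ¬ Function.Injective L := by
    intro h
    have := LinearMap.finrank_le_finrank_of_injective h
    simp [Module.finrank_pi] at this
  rw [← LinearMap.ker_eq_bot] at hnotinj
  obtain ⟨p, hp, hp0⟩ := Submodule.exists_mem_ne_zero_of_ne_bot hnotinj
  have h0 := congrFun (LinearMap.mem_ker.mp hp) 0
  have h1 := congrFun (LinearMap.mem_ker.mp hp) 1
  simp [L, Fin.sum_univ_three] at h0 h1
  exact ⟨p, hp0, by rw [eval_linear q hq p]; exact h0, by rw [eval_linear r hr p]; exact h1⟩

lemma prime_X_mv (i : Fin 3) : Prime (X i : MvPolynomial (Fin 3) ℂ) := by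
  have h0 : Prime (X 0 : MvPolynomial (Fin 3) ℂ) := by
    rw [← MulEquiv.prime_iff (finSuccEquiv ℂ 2).toMulEquiv]
    show Prime (finSuccEquiv ℂ 2 (X 0))
    rw [finSuccEquiv_X_zero]
    exact Polynomial.prime_X
  rw [← MulEquiv.prime_iff (renameEquiv ℂ (Equiv.swap (0 : Fin 3) i)).toMulEquiv] at h0
  have : (renameEquiv ℂ (Equiv.swap (0 : Fin 3) i)).toMulEquiv (X 0) = X i := by
    show (renameEquiv ℂ (Equiv.swap (0 : Fin 3) i)) (X 0) = X i
    simp [renameEquiv_apply, rename_X]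
  rwa [this] at h0

lemma prime_sum (u : Fin 3 → ℂ) (i : Fin 3) (hu : u i ≠ 0) :
    Prime (∑ k, C (u k) * X k : MvPolynomial (Fin 3) ℂ) := by
  classical
  set r : MvPolynomial (Fin 3) ℂ := ∑ k ∈ Finset.univ.erase i, C (u k) * X k with hr
  set σT : Fin 3 → MvPolynomial (Fin 3) ℂ :=
    fun j => if j = i then C (u i)⁻¹ * (X i - r) else X j with hσT
  set σS : Fin 3 → MvPolynomial (Fin 3) ℂ :=
    fun j => if j = i then ∑ k, C (u k) * X k else X j with hσS
  have haevalr : ∀ (τ : Fin 3 → MvPolynomial (Fin 3) ℂ),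
      (∀ k, k ≠ i → τ k = X k) → aeval τ r = r := by
    intro τ hτ
    rw [hr, map_sum]
    refine Finset.sum_congr rfl fun k hk => ?_
    have hk' : k ≠ i := Finset.ne_of_mem_erase hk
    simp [hτ k hk', algebraMap_eq]
  have key : aeval σT (∑ k, C (u k) * X k) = X i := by
    rw [map_sum, ← Finset.add_sum_erase _ _ (Finset.mem_univ i)]
    have h1 : ∀ k ∈ Finset.univ.erase i, aeval σT (C (u k) * X k) = C (u k) * X k := by
      intro k hk
      have hk' : k ≠ i := Finset.ne_of_mem_erase hk
      simp [hσT, hk', algebraMap_eq]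
    rw [Finset.sum_congr rfl h1, ← hr]
    have h2 : aeval σT (C (u i) * X i) = C (u i) * (C (u i)⁻¹ * (X i - r)) := by
      simp [hσT, algebraMap_eq]
    rw [h2, ← mul_assoc, ← C_mul, mul_inv_cancel₀ hu, C_1, one_mul, sub_add_cancel]
  have hTS : (aeval σT).comp (aeval σS) = AlgHom.id ℂ (MvPolynomial (Fin 3) ℂ) := by
    apply algHom_ext
    intro j
    by_cases hj : j = i
    · subst hj
      have hσSj : σS j = ∑ k, C (u k) * X k := by rw [hσS]; simp
      simp only [AlgHom.comp_apply, AlgHom.id_apply, aeval_X, hσSj]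
      exact key
    · simp [hσS, hσT, hj, aeval_X]
  have hST : (aeval σS).comp (aeval σT) = AlgHom.id ℂ (MvPolynomial (Fin 3) ℂ) := by
    apply algHom_ext
    intro j
    by_cases hj : j = i
    · subst hj
      have hσTj : σT j = C (u j)⁻¹ * (X j - r) := by rw [hσT]; simp
      have hσSj : σS j = ∑ k, C (u k) * X k := by rw [hσS]; simp
      simp only [AlgHom.comp_apply, AlgHom.id_apply, aeval_X, hσTj]
      rw [map_mul, map_sub, aeval_X, haevalr σS (fun k hk => by simp [hσS, hk]), hσSj]
      have hC : aeval σS (C (u j)⁻¹ : MvPolynomial (Fin 3) ℂ) = C (u j)⁻¹ := by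
        simp [algebraMap_eq]
      rw [hC, ← Finset.add_sum_erase _ _ (Finset.mem_univ j), ← hr, add_sub_cancel_right,
        ← mul_assoc, ← C_mul, inv_mul_cancel₀ hu, C_1, one_mul]
    · simp [hσS, hσT, hj, aeval_X]
  let E : MvPolynomial (Fin 3) ℂ ≃ₐ[ℂ] MvPolynomial (Fin 3) ℂ :=
    AlgEquiv.ofAlgHom (aeval σT) (aeval σS) hTS hST
  rw [← MulEquiv.prime_iff E.toMulEquiv]
  show Prime (E (∑ k, C (u k) * X k))
  show Prime (aeval σT (∑ k, C (u k) * X k))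
  rw [key]
  exact prime_X_mv i

lemma prime_linear (q : MvPolynomial (Fin 3) ℂ) (hq : q.IsHomogeneous 1) (h0 : q ≠ 0) :
    Prime q := by
  set u : Fin 3 → ℂ := fun i => coeff (Finsupp.single i 1) q with hu
  have hq' : q = ∑ k, C (u k) * X k := by
    rw [Fin.sum_univ_three]; exact linear_eq q hq
  have : ∃ i, u i ≠ 0 := by
    by_contra h
    push_neg at h
    exact h0 (by simp [hq', h])
  obtain ⟨i, hi⟩ := this
  rw [hq']
  exact prime_sum u i hi

/-- Let `F = abcd - V²` define a smooth quartic, with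
`ef = λ²ab + 2λV + cd` and `eg = μ²ac + 2μV + bd` (`λμ ≠ 0`). Then `e` divides
`λb - μc` or `λμa - d`; hence the line `e = 0` passes through the intersection point of
`b = 0` and `c = 0`, or through that of `a = 0` and `d = 0`. -/
theorem bitangent_not_in_second_family
    (a b c d e f g V : MvPolynomial (Fin 3) ℂ)
    (ha : a.IsHomogeneous 1) (hb : b.IsHomogeneous 1) (hc : c.IsHomogeneous 1)
    (hd : d.IsHomogeneous 1) (he : e.IsHomogeneous 1) (hf : f.IsHomogeneous 1)
    (hg : g.IsHomogeneous 1) (hV : V.IsHomogeneous 2) (he0 : e ≠ 0)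
    (lam mu : ℂ) (hlam : lam ≠ 0) (hmu : mu ≠ 0)
    (h1 : e * f = (C lam) ^ 2 * a * b + 2 * C lam * V + c * d)
    (h2 : e * g = (C mu) ^ 2 * a * c + 2 * C mu * V + b * d) :
    (e ∣ (C lam * b - C mu * c) ∨ e ∣ (C (lam * mu) * a - d)) ∧
    ((∃ p : Fin 3 → ℂ, p ≠ 0 ∧ eval p e = 0 ∧ eval p b = 0 ∧ eval p c = 0) ∨
     (∃ p : Fin 3 → ℂ, p ≠ 0 ∧ eval p e = 0 ∧ eval p a = 0 ∧ eval p d = 0)) := by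
  have key : e * (C mu * f - C lam * g)
      = (C lam * b - C mu * c) * (C (lam * mu) * a - d) := by
    rw [C_mul]
    linear_combination (C mu : MvPolynomial (Fin 3) ℂ) * h1 - (C lam : MvPolynomial (Fin 3) ℂ) * h2
  have hdvd : e ∣ (C lam * b - C mu * c) * (C (lam * mu) * a - d) := ⟨_, key.symm⟩
  have hp := prime_linear e he he0
  rcases hp.2.2 _ _ hdvd with h | h
  · refine ⟨Or.inl h, Or.inl ?_⟩
    obtain ⟨p, hp0, hpe, hpb⟩ := common_zero e b he hb
    obtain ⟨k, hk⟩ := h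
    have : eval p (C lam * b - C mu * c) = 0 := by rw [hk]; simp [hpe]
    simp [hpb] at this
    rcases this with h' | h'
    · exact absurd h' hmu
    · exact ⟨p, hp0, hpe, hpb, h'⟩
  · refine ⟨Or.inr h, Or.inr ?_⟩
    obtain ⟨p, hp0, hpe, hpa⟩ := common_zero e a he ha
    obtain ⟨k, hk⟩ := h
    have : eval p (C (lam * mu) * a - d) = 0 := by rw [hk]; simp [hpe]
    simp [hpa] at this
    exact ⟨p, hp0, hpe, hpa, this⟩
end

section
/- Let g₁, g₂, g₃ be binary forms of degrees 4, 4, 4 obtained by restricting homogeneous forms of degrees 1,2,3 (times appropriate factors) to a line L' in ℙ³: if g₁|_{L'}·g₃|_{L'} - g₂|_{L'}² = -q² for some binary quadratic form q, and g₁|_{L'} ≢ 0, then there is a binary linear form l₄ with l₄·g₁|_{L'} = -(g₂|_{L'} + q) (after possibly replacing q by -q), and it satisfies l₄²·g₁|_{L'} + 2l₄·g₂|_{L'} + g₃|_{L'} = 0. -/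
open MvPolynomial

private lemma cofactor_homogeneous {p c : MvPolynomial (Fin 2) ℂ} {m k : ℕ}
    (hp : p.IsHomogeneous m) (hp0 : p ≠ 0) (h : (p * c).IsHomogeneous (m + k)) :
    c.IsHomogeneous k := by
  have hmem : ∀ j, p * homogeneousComponent j c ∈
      homogeneousSubmodule (Fin 2) ℂ (m + j) := fun j =>
    (mem_homogeneousSubmodule _ _).2 (hp.mul (homogeneousComponent_isHomogeneous j c))
  have hcomp : ∀ i, homogeneousComponent (m + i) (p * c) = p * homogeneousComponent i c := by
    intro i
    conv_lhs => rw [← sum_homogeneousComponent c, Finset.mul_sum, map_sum]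
    rw [Finset.sum_eq_single i
      (fun j _ hj => by rw [homogeneousComponent_of_mem (hmem j), if_neg (by omega)])
      (fun hi => by
        rw [homogeneousComponent_eq_zero _ c (by simpa using hi), mul_zero, map_zero]),
      homogeneousComponent_of_mem (hmem i), if_pos rfl]
  have hzero : ∀ j, j ≠ k → homogeneousComponent j c = 0 := by
    intro j hj
    have h2 := hcomp j
    rw [homogeneousComponent_of_mem ((mem_homogeneousSubmodule _ _).2 h),
      if_neg (by omega)] at h2
    exact ((mul_eq_zero.mp h2.symm).resolve_left hp0)
  have hc : c = homogeneousComponent k c := by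
    conv_lhs => rw [← sum_homogeneousComponent c]
    rw [Finset.sum_eq_single k (fun j _ hj => hzero j hj)
      (fun hk => homogeneousComponent_eq_zero _ c (by simpa using hk))]
  rw [hc]
  exact homogeneousComponent_isHomogeneous k c

private lemma fin2_degree (d : Fin 2 →₀ ℕ) : d.degree = d 0 + d 1 := by
  rw [Finsupp.degree_apply, Finset.sum_subset (Finset.subset_univ d.support)
    (fun i _ hi => Finsupp.notMem_support_iff.mp hi), Fin.sum_univ_two]

private lemma linear_form_eq {p : MvPolynomial (Fin 2) ℂ} (hp : p.IsHomogeneous 1) :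
    p = C (coeff (Finsupp.single 0 1) p) * X 0 + C (coeff (Finsupp.single 1 1) p) * X 1 := by
  ext d
  rw [coeff_add, coeff_C_mul, coeff_C_mul, coeff_X', coeff_X']
  by_cases hd : d.degree = 1
  · have hd' := hd
    rw [fin2_degree] at hd'
    have : d = Finsupp.single 0 1 ∨ d = Finsupp.single 1 1 := by
      rcases Nat.eq_zero_or_pos (d 0) with h0 | h0
      · right; ext i; fin_cases i <;> simp [Finsupp.single_apply] <;> omega
      · left; ext i; fin_cases i <;> simp [Finsupp.single_apply] <;> omega
    rcases this with rfl | rfl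
    · rw [if_pos rfl, if_neg (by
        intro hcon
        have := DFunLike.congr_fun hcon (0 : Fin 2)
        simp [Finsupp.single_apply] at this), mul_one, mul_zero, add_zero]
    · rw [if_pos rfl, if_neg (by
        intro hcon
        have := DFunLike.congr_fun hcon (0 : Fin 2)
        simp [Finsupp.single_apply] at this), mul_one, mul_zero, zero_add]
  · rw [hp.coeff_eq_zero hd, if_neg (fun hcon => hd (by rw [← hcon, fin2_degree]; simp)),
      if_neg (fun hcon => hd (by rw [← hcon, fin2_degree]; simp)), mul_zero, mul_zero, add_zero]

private lemma prime_X0 : Prime (X 0 : MvPolynomial (Fin 2) ℂ) := by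
  rw [← MulEquiv.prime_iff (finSuccEquiv ℂ 1).toMulEquiv]
  simpa [finSuccEquiv_X_zero] using (Polynomial.prime_X (R := MvPolynomial (Fin 1) ℂ))

private lemma prime_X1 : Prime (X 1 : MvPolynomial (Fin 2) ℂ) := by
  have h := (MulEquiv.prime_iff (renameEquiv ℂ (Equiv.swap (0 : Fin 2) 1)).toMulEquiv
    (p := (X 0 : MvPolynomial (Fin 2) ℂ))).mpr prime_X0
  simpa [Equiv.swap_apply_left] using h

private lemma prime_linear_s10 {p : MvPolynomial (Fin 2) ℂ} (hp : p.IsHomogeneous 1) (hp0 : p ≠ 0) :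
    Prime p := by
  set a := coeff (Finsupp.single 0 1) p with ha_def
  set b := coeff (Finsupp.single 1 1) p with hb_def
  have heq := linear_form_eq hp
  rw [← ha_def, ← hb_def] at heq
  by_cases ha : a = 0
  · have hb : b ≠ 0 := by
      intro hb
      apply hp0
      rw [heq, ha, hb]; simp
    have hu : IsUnit (C b : MvPolynomial (Fin 2) ℂ) :=
      (isUnit_iff_ne_zero.2 hb).map C
    have hassoc : Associated (X 1 : MvPolynomial (Fin 2) ℂ) p :=
      ⟨hu.unit, by rw [IsUnit.unit_spec, heq, ha]; simp [mul_comm]⟩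
    exact hassoc.prime prime_X1
  · let g : Fin 2 → MvPolynomial (Fin 2) ℂ := ![C a * X 0 + C b * X 1, X 1]
    let g' : Fin 2 → MvPolynomial (Fin 2) ℂ := ![C a⁻¹ * (X 0 - C b * X 1), X 1]
    have hgg' : (aeval g).comp (aeval g') = AlgHom.id ℂ (MvPolynomial (Fin 2) ℂ) := by
      apply algHom_ext
      intro i
      fin_cases i
      · simp [g, g', ← C_mul, inv_mul_cancel₀ ha]
        ring_nf
        rw [← C_mul, inv_mul_cancel₀ ha]
        ring_nf
        rw [C_1]
        ring
      · simp [g, g']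
    have hg'g : (aeval g').comp (aeval g) = AlgHom.id ℂ (MvPolynomial (Fin 2) ℂ) := by
      apply algHom_ext
      intro i
      fin_cases i
      · simp [g, g']
        ring_nf
        rw [← C_mul, mul_inv_cancel₀ ha]
        ring_nf
        rw [C_1]
        ring
      · simp [g, g']
    let e : MvPolynomial (Fin 2) ℂ ≃ₐ[ℂ] MvPolynomial (Fin 2) ℂ :=
      AlgEquiv.ofAlgHom (aeval g) (aeval g') hgg' hg'g
    have hep : e (X 0) = p := by
      show aeval g (X 0) = p
      rw [aeval_X, heq]; rfl
    have := (MulEquiv.prime_iff e.toMulEquiv (p := (X 0 : MvPolynomial (Fin 2) ℂ))).mpr prime_X0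
    simpa [hep] using this

/-- If the binary forms `g₁|_{L'}, g₂|_{L'}, g₃|_{L'}` of degrees 1, 2, 3
(restrictions of forms of degrees 1, 2, 3 to a line `L'` in `ℙ³`) satisfy
`g₁|g₃| - g₂|² = -q²` for a binary quadratic form `q`, and `g₁|_{L'} ≢ 0`, then there is a
binary linear form `l₄` with `l₄·g₁| = -(g₂| + q)` (after possibly replacing `q` by `-q`),
and it satisfies `l₄²·g₁| + 2l₄·g₂| + g₃| = 0`. -/
theorem double_tangent_lifts_to_line_in_cubic
    (A₁ A₂ A₃ q : MvPolynomial (Fin 2) ℂ)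
    (h1 : A₁.IsHomogeneous 1) (h2 : A₂.IsHomogeneous 2) (h3 : A₃.IsHomogeneous 3)
    (hq : q.IsHomogeneous 2)
    (hsq : A₁ * A₃ - A₂ ^ 2 = -q ^ 2)
    (hA₁ : A₁ ≠ 0) :
    ∃ l₄ : MvPolynomial (Fin 2) ℂ, l₄.IsHomogeneous 1 ∧
      (l₄ * A₁ = -(A₂ + q) ∨ l₄ * A₁ = -(A₂ - q)) ∧
      l₄ ^ 2 * A₁ + 2 * l₄ * A₂ + A₃ = 0 := by

  have hprime := prime_linear_s10 h1 hA₁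
  have hdvd : A₁ ∣ (A₂ + q) * (A₂ - q) := ⟨A₃, by linear_combination -hsq⟩
  rcases (hprime.2.2 _ _ hdvd) with ⟨c, hc⟩ | ⟨c, hc⟩
  · refine ⟨-c, ?_, Or.inl (by rw [hc]; ring), ?_⟩
    · exact (cofactor_homogeneous h1 hA₁ (m := 1) (k := 1)
        (by rw [← hc]; exact h2.add hq)).neg
    · have key : A₁ * ((-c) ^ 2 * A₁ + 2 * (-c) * A₂ + A₃) = A₁ * 0 := by
        rw [mul_zero]
        linear_combination (-(A₁ * c - A₂ + q)) * hc + hsq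
      exact mul_left_cancel₀ hA₁ key
  · refine ⟨-c, ?_, Or.inr (by rw [hc]; ring), ?_⟩
    · exact (cofactor_homogeneous h1 hA₁ (m := 1) (k := 1)
        (by rw [← hc]; exact h2.sub hq)).neg
    · have key : A₁ * ((-c) ^ 2 * A₁ + 2 * (-c) * A₂ + A₃) = A₁ * 0 := by
        rw [mul_zero]
        linear_combination (-(A₁ * c - A₂ - q)) * hc + hsq
      exact mul_left_cancel₀ hA₁ key
end

section
/- A binary quartic form ax⁴ + bx³y + cx²y² + dxy³ + ey⁴ over ℂ is a complete square (of a binary quadratic form) if and only if the coefficients satisfy the seven equations: 8a²d - 4abc + b³ = 0, cb² + 2abd - 4ac² + 16a²e = 0, b²d + 8abe - 4acd = 0, ad² - b²e = 0, bd² - 4bce + 8ade = 0, cd² - 4c²e + 2bde + 16ae² = 0, d³ - 4cde + 8be² = 0. -/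
/-- A binary quartic form `ax⁴ + bx³y + cx²y² + dxy³ + ey⁴` over `ℂ` is the
complete square of a binary quadratic form `ξx² + ηxy + ζy²` (i.e. `a = ξ²`, `b = 2ξη`,
`c = 2ξζ + η²`, `d = 2ηζ`, `e = ζ²`) if and only if its coefficients satisfy the seven listed
equations. -/
theorem binary_quartic_is_square_iff
    (a b c d e : ℂ) :
    (∃ ξ η ζ : ℂ, a = ξ ^ 2 ∧ b = 2 * ξ * η ∧ c = 2 * ξ * ζ + η ^ 2 ∧
        d = 2 * η * ζ ∧ e = ζ ^ 2) ↔
    (8 * a ^ 2 * d - 4 * a * b * c + b ^ 3 = 0 ∧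
     c * b ^ 2 + 2 * a * b * d - 4 * a * c ^ 2 + 16 * a ^ 2 * e = 0 ∧
     b ^ 2 * d + 8 * a * b * e - 4 * a * c * d = 0 ∧
     a * d ^ 2 - b ^ 2 * e = 0 ∧
     b * d ^ 2 - 4 * b * c * e + 8 * a * d * e = 0 ∧
     c * d ^ 2 - 4 * c ^ 2 * e + 2 * b * d * e + 16 * a * e ^ 2 = 0 ∧
     d ^ 3 - 4 * c * d * e + 8 * b * e ^ 2 = 0) := by
  constructor
  · rintro ⟨ξ, η, ζ, rfl, rfl, rfl, rfl, rfl⟩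
    refine ⟨by ring, by ring, by ring, by ring, by ring, by ring, by ring⟩
  · rintro ⟨h1, h2, h3, h4, h5, h6, h7⟩
    by_cases ha : a = 0
    · subst ha
      have hb : b = 0 := by
        have h : b ^ 3 = 0 := by linear_combination h1
        exact pow_eq_zero_iff (three_ne_zero) |>.mp h
      subst hb
      by_cases he : e = 0
      · subst he
        have hd : d = 0 := by
          have h : d ^ 3 = 0 := by linear_combination h7
          exact pow_eq_zero_iff (three_ne_zero) |>.mp h
        subst hd
        obtain ⟨η, hη⟩ := IsAlgClosed.exists_pow_nat_eq (k := ℂ) c zero_lt_two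
        exact ⟨0, η, 0, by ring, by ring, by rw [← hη]; ring, by ring, by ring⟩
      · obtain ⟨ζ, hζ⟩ := IsAlgClosed.exists_pow_nat_eq (k := ℂ) e zero_lt_two
        have hζ0 : ζ ≠ 0 := by
          intro h; apply he; rw [← hζ, h]; ring
        have key : d ^ 2 = 4 * c * e := by
          by_cases hd : d = 0
          · subst hd
            have hc : c = 0 := by
              have : c ^ 2 * e = 0 := by linear_combination (-1/4 : ℂ) * h6
              rcases mul_eq_zero.mp this with h | h
              · exact pow_eq_zero_iff (two_ne_zero) |>.mp h
              · exact absurd h he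
            rw [hc]; ring
          · have : d * (d ^ 2 - 4 * c * e) = 0 := by linear_combination h7
            rcases mul_eq_zero.mp this with h | h
            · exact absurd h hd
            · linear_combination h
        refine ⟨0, d / (2 * ζ), ζ, by ring, by ring, ?_, ?_, hζ.symm⟩
        · field_simp
          linear_combination 4 * c * hζ - key
        · field_simp
    · obtain ⟨ξ, hξ⟩ := IsAlgClosed.exists_pow_nat_eq (k := ℂ) a zero_lt_two
      have hξ0 : ξ ≠ 0 := by
        intro h; apply ha; rw [← hξ, h]; ring
      refine ⟨ξ, b / (2 * ξ), (c - (b / (2 * ξ)) ^ 2) / (2 * ξ), hξ.symm, ?_, ?_, ?_, ?_⟩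
      · field_simp
      · field_simp; ring
      · field_simp
        linear_combination h1 + (8 * d * (ξ^2 + a) - 4 * b * c) * hξ
      · field_simp
        linear_combination (-b) * h1 + 4 * a * h2 +
          (64 * e * (ξ^4 + a * ξ^2 + a^2) - 16 * c^2 * (ξ^2 + a) + 8 * c * b^2) * hξ
end
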